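/- arXiv:1503.00134 — 8 statements merged into one kernel-verified Lean document; each statement's English description precedes it below -/
import Mathlib

section
/- The map φ̂(x,y) = (y(1 + (1+y²)²/x²), (1+y²)/x) on ℝ₊² is conjugate to ψ(x,y) = (y, 1/x) via Π̃(x,y) = (y(1+y²)/x, (1+y²)/(xy)); that is, Π̃ ∘ φ̂ = ψ ∘ Π̃ and Π̃ is a bijection of ℝ₊². -/
def Qpos : Set (ℝ × ℝ) := {p | 0 < p.1 ∧ 0 < p.2}

/-- Reduced map of F₀. -/
noncomputable def phiHat : ℝ × ℝ → ℝ × ℝ :=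
  fun p => (p.2 * (p.1 ^ 2 + (1 + p.2 ^ 2) ^ 2) / p.1 ^ 2, (1 + p.2 ^ 2) / p.1)

noncomputable def psi4 : ℝ × ℝ → ℝ × ℝ := fun p => (p.2, 1 / p.1)

noncomputable def PiTilde : ℝ × ℝ → ℝ × ℝ :=
  fun p => (p.2 * (1 + p.2 ^ 2) / p.1, (1 + p.2 ^ 2) / (p.1 * p.2))

/-- Explicit inverse of `PiTilde` on `Qpos`. -/
noncomputable def PiTildeInv : ℝ × ℝ → ℝ × ℝ :=
  fun q => ((1 + q.1 / q.2) / (q.2 * Real.sqrt (q.1 / q.2)), Real.sqrt (q.1 / q.2))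

theorem phiHat_conjugate_psi4 :
    (∀ p ∈ Qpos, PiTilde (phiHat p) = psi4 (PiTilde p)) ∧
    Set.BijOn PiTilde Qpos Qpos := by
  constructor
  · rintro ⟨x, y⟩ ⟨hx, hy⟩
    simp only [phiHat, psi4, PiTilde, Prod.mk.injEq]
    have hx' : x ≠ 0 := ne_of_gt hx
    have hy' : y ≠ 0 := ne_of_gt hy
    have h1 : (0:ℝ) < 1 + y ^ 2 := by positivity
    have h2 : (0:ℝ) < x ^ 2 + (1 + y ^ 2) ^ 2 := by positivity
    constructor
    · field_simp
    · field_simp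
  · have hmaps : Set.MapsTo PiTilde Qpos Qpos := by
      rintro ⟨x, y⟩ ⟨hx, hy⟩
      simp only [Qpos, PiTilde, Set.mem_setOf_eq] at hx hy ⊢
      exact ⟨by positivity, by positivity⟩
    have hmaps' : Set.MapsTo PiTildeInv Qpos Qpos := by
      rintro ⟨u, v⟩ ⟨hu, hv⟩
      simp only [Qpos, PiTildeInv, Set.mem_setOf_eq] at hu hv ⊢
      have h : (0:ℝ) < u / v := by positivity
      have hs : (0:ℝ) < Real.sqrt (u / v) := Real.sqrt_pos.mpr h
      exact ⟨by positivity, hs⟩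
    have hinv : Set.InvOn PiTildeInv PiTilde Qpos Qpos := by
      constructor
      · rintro ⟨x, y⟩ ⟨hx, hy⟩
        have hx' : x ≠ 0 := ne_of_gt hx
        have hy' : y ≠ 0 := ne_of_gt hy
        have h1 : (0:ℝ) < 1 + y ^ 2 := by positivity
        simp only [PiTilde, PiTildeInv, Prod.mk.injEq]
        have hq : (y * (1 + y ^ 2) / x) / ((1 + y ^ 2) / (x * y)) = y ^ 2 := by
          field_simp
        rw [hq]
        have hs : Real.sqrt (y ^ 2) = y := by
          rw [Real.sqrt_sq hy.le]
        rw [hs]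
        have : (1 + y ^ 2) / (x * y) ≠ 0 := by positivity
        constructor
        · field_simp
        · rfl
      · rintro ⟨u, v⟩ ⟨hu, hv⟩
        have hu' : u ≠ 0 := ne_of_gt hu
        have hv' : v ≠ 0 := ne_of_gt hv
        have h : (0:ℝ) < u / v := by positivity
        have hs : (0:ℝ) < Real.sqrt (u / v) := Real.sqrt_pos.mpr h
        have hsq : Real.sqrt (u / v) ^ 2 = u / v := Real.sq_sqrt h.le
        simp only [PiTilde, PiTildeInv, Prod.mk.injEq]
        set s := Real.sqrt (u / v) with hsdef
        have hs' : s ≠ 0 := ne_of_gt hs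
        have e1 : (1 + u / v) / (v * s) = (1 + s ^ 2) / (v * s) := by rw [hsq]
        have h1 : (0:ℝ) < 1 + s ^ 2 := by positivity
        rw [e1]
        constructor
        · have : s * (1 + s ^ 2) / ((1 + s ^ 2) / (v * s)) = v * s ^ 2 := by
            field_simp
          rw [this, hsq]; field_simp
        · field_simp
    exact Set.InvOn.bijOn hinv hmaps hmaps'
end

section
/- The map φ̂(x,y) = (y(x² + (1+y²)²)/x², (1+y²)/x) on ℝ₊² is globally 4-periodic: its fourth iterate is the identity on ℝ₊². -/
lemma phiHat_sq (x y : ℝ) (hx : 0 < x) (hy : 0 < y) :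
    phiHat (phiHat (x, y)) = ((1 + y ^ 2) ^ 2 / (x * y ^ 2), 1 / y) := by
  have hx' : x ≠ 0 := hx.ne'
  have hy' : y ≠ 0 := hy.ne'
  have hS : x ^ 2 + (1 + y ^ 2) ^ 2 ≠ 0 := by positivity
  simp only [phiHat, Prod.mk.injEq]
  constructor <;> field_simp <;> ring

theorem phiHat_four_periodic : ∀ p ∈ Qpos, phiHat^[4] p = p := by
  rintro ⟨x, y⟩ ⟨hx, hy⟩
  simp only [Qpos, Set.mem_setOf_eq] at *
  have h1 := phiHat_sq x y hx hy
  have hx' : x ≠ 0 := hx.ne'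
  have hy' : y ≠ 0 := hy.ne'
  have h2 := phiHat_sq ((1 + y ^ 2) ^ 2 / (x * y ^ 2)) (1 / y)
    (by positivity) (by positivity)
  show phiHat (phiHat (phiHat (phiHat (x, y)))) = (x, y)
  rw [h1, h2]
  rw [Prod.mk.injEq]
  constructor <;> field_simp <;> ring
end

section
/- The F₀ map φ(x₁,x₂,x₃,x₄) = (x₃, x₄, (x₂²+x₃²)/x₁, (x₁²x₄² + (x₂²+x₃²)²)/(x₁²x₂)) on ℝ₊⁴ is semiconjugate to ψ(x,y) = (y, 1/x) on ℝ₊² via π(x₁,x₂,x₃,x₄) = (x₃(x₂²+x₃²)/(x₁x₂x₄), x₂(x₂²+x₃²)/(x₁x₃x₄)); that is, π ∘ φ = ψ ∘ π. -/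
/-- The F₀ map on ℝ⁴. -/
noncomputable def phiF0 : ℝ × ℝ × ℝ × ℝ → ℝ × ℝ × ℝ × ℝ :=
  fun x =>
    match x with
    | (x1, x2, x3, x4) =>
      (x3, x4, (x2 ^ 2 + x3 ^ 2) / x1,
        (x1 ^ 2 * x4 ^ 2 + (x2 ^ 2 + x3 ^ 2) ^ 2) / (x1 ^ 2 * x2))

noncomputable def piF0 : ℝ × ℝ × ℝ × ℝ → ℝ × ℝ :=
  fun x =>
    match x with
    | (x1, x2, x3, x4) =>
      (x3 * (x2 ^ 2 + x3 ^ 2) / (x1 * x2 * x4), x2 * (x2 ^ 2 + x3 ^ 2) / (x1 * x3 * x4))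

theorem phiF0_semiconjugate_psi4 :
    ∀ x1 x2 x3 x4 : ℝ, 0 < x1 → 0 < x2 → 0 < x3 → 0 < x4 →
      piF0 (phiF0 (x1, x2, x3, x4)) = psi4 (piF0 (x1, x2, x3, x4)) := by
  intro x1 x2 x3 x4 h1 h2 h3 h4
  have hs : 0 < x2 ^ 2 + x3 ^ 2 := by positivity
  have hq : 0 < x1 ^ 2 * x4 ^ 2 + (x2 ^ 2 + x3 ^ 2) ^ 2 := by positivity
  simp only [phiF0, piF0, psi4, Prod.mk.injEq]
  constructor <;> field_simp <;> ring
end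

section
/- The dP₃ map φ(x₁,…,x₆) = (x₃, x₄, x₅, x₆, (x₂x₄+x₃x₅)/x₁, (x₁x₄x₆+x₂x₄x₅+x₃x₅²)/(x₁x₂)) on ℝ₊⁶ is semiconjugate to ψ(x,y) = (y, y/x) on ℝ₊² via π(x₁,…,x₆) = (x₂x₄/(x₃x₅), x₁x₄x₆/(x₅(x₂x₄+x₃x₅))); that is, π ∘ φ = ψ ∘ π. -/
/-- The dP₃ map on ℝ⁶. -/
noncomputable def phiDP3 : ℝ × ℝ × ℝ × ℝ × ℝ × ℝ → ℝ × ℝ × ℝ × ℝ × ℝ × ℝ :=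
  fun x =>
    match x with
    | (x1, x2, x3, x4, x5, x6) =>
      (x3, x4, x5, x6, (x2 * x4 + x3 * x5) / x1,
        (x1 * x4 * x6 + x2 * x4 * x5 + x3 * x5 ^ 2) / (x1 * x2))

noncomputable def psi6 : ℝ × ℝ → ℝ × ℝ := fun p => (p.2, p.2 / p.1)

noncomputable def piDP3 : ℝ × ℝ × ℝ × ℝ × ℝ × ℝ → ℝ × ℝ :=
  fun x =>
    match x with
    | (x1, x2, x3, x4, x5, x6) =>
      (x2 * x4 / (x3 * x5), x1 * x4 * x6 / (x5 * (x2 * x4 + x3 * x5)))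

theorem phiDP3_semiconjugate_psi6 :
    ∀ x1 x2 x3 x4 x5 x6 : ℝ, 0 < x1 → 0 < x2 → 0 < x3 → 0 < x4 → 0 < x5 → 0 < x6 →
      piDP3 (phiDP3 (x1, x2, x3, x4, x5, x6)) = psi6 (piDP3 (x1, x2, x3, x4, x5, x6)) := by
  intro x1 x2 x3 x4 x5 x6 h1 h2 h3 h4 h5 h6
  have hs : 0 < x2 * x4 + x3 * x5 := by positivity
  have ht : 0 < x2 * x4 * x5 + x1 * x4 * x6 + x3 * x5 ^ 2 := by positivity
  simp only [phiDP3, psi6, piDP3, Prod.mk.injEq]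
  constructor
  · field_simp
  · field_simp
    ring
end

section
/- Let φ be the F₀ map and C = {x ∈ ℝ₊⁴ : x₂² + x₃² = x₁x₄ and x₃ = x₂}. Then C is invariant under φ, and for any x = (x₁,x₂,x₃,x₄) ∈ C and n ≥ 0, φ^(n)(x) = 2^{n(n−1)/2} (x₂/x₁)ⁿ (x₁, 2ⁿx₂, 2ⁿx₃, 4ⁿx₄). -/
/-- The fiber C₍₁,₁₎ for the F₀ map. -/
def C11 : Set (ℝ × ℝ × ℝ × ℝ) :=
  {x | (0 < x.1 ∧ 0 < x.2.1 ∧ 0 < x.2.2.1 ∧ 0 < x.2.2.2) ∧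
    x.2.1 ^ 2 + x.2.2.1 ^ 2 = x.1 * x.2.2.2 ∧ x.2.2.1 = x.2.1}

lemma tri (n : ℕ) : (n + 1) * ((n + 1) - 1) / 2 = n * (n - 1) / 2 + n := by
  cases n with
  | zero => simp
  | succ m =>
    obtain ⟨k, hk⟩ := Nat.even_mul_succ_self m
    have e1 : (m + 1 + 1) * ((m + 1 + 1) - 1) = 2 * k + 2 * (m + 1) := by
      simp only [Nat.add_sub_cancel]
      rw [show (m + 2) * (m + 1) = m * (m + 1) + 2 * (m + 1) by ring, hk]
      ring
    have e2 : (m + 1) * ((m + 1) - 1) = 2 * k := by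
      simp only [Nat.add_sub_cancel]
      rw [mul_comm, hk]; ring
    rw [e1, e2]; omega

theorem phiF0_on_C11 :
    (∀ x ∈ C11, phiF0 x ∈ C11) ∧
    (∀ x1 x2 x3 x4 : ℝ, (x1, x2, x3, x4) ∈ C11 → ∀ n : ℕ,
      phiF0^[n] (x1, x2, x3, x4) =
        ((2 : ℝ) ^ (n * (n - 1) / 2) * (x2 / x1) ^ n * x1,
         (2 : ℝ) ^ (n * (n - 1) / 2) * (x2 / x1) ^ n * (2 ^ n * x2),
         (2 : ℝ) ^ (n * (n - 1) / 2) * (x2 / x1) ^ n * (2 ^ n * x3),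
         (2 : ℝ) ^ (n * (n - 1) / 2) * (x2 / x1) ^ n * (4 ^ n * x4))) := by
  constructor
  · rintro ⟨x1, x2, x3, x4⟩ ⟨⟨h1, h2, h3, h4⟩, hC, h32⟩
    dsimp only at h1 h2 h3 h4 hC h32
    subst h32
    have hx1 : x1 ≠ 0 := ne_of_gt h1
    have hx3 : x3 ≠ 0 := ne_of_gt h3
    simp only [C11, Set.mem_setOf_eq, phiF0]
    refine ⟨⟨h3, h4, by positivity, by positivity⟩, ?_, ?_⟩
    · show x4 ^ 2 + ((x3 ^ 2 + x3 ^ 2) / x1) ^ 2 =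
        x3 * ((x1 ^ 2 * x4 ^ 2 + (x3 ^ 2 + x3 ^ 2) ^ 2) / (x1 ^ 2 * x3))
      field_simp
    · show (x3 ^ 2 + x3 ^ 2) / x1 = x4
      field_simp
      linarith [hC]
  · rintro x1 x2 x3 x4 ⟨⟨h1, h2, h3, h4⟩, hC, h32⟩ n
    dsimp only at h1 h2 h3 h4 hC h32
    subst h32
    have hx1 : x1 ≠ 0 := ne_of_gt h1
    have hx3 : x3 ≠ 0 := ne_of_gt h3
    induction n with
    | zero => simp
    | succ n ih =>
      rw [Function.iterate_succ_apply', ih]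
      have e2 : (2 : ℝ) ^ ((n + 1) * ((n + 1) - 1) / 2) = 2 ^ (n * (n - 1) / 2) * 2 ^ n := by
        rw [tri, pow_add]
      simp only [phiF0, Prod.mk.injEq, e2]
      refine ⟨?_, ?_, ?_, ?_⟩
      · rw [div_pow, div_pow]; field_simp; ring
      · simp only [show (4:ℝ) = 2 * 2 by norm_num, mul_pow]
        rw [div_pow, div_pow]
        field_simp
        linear_combination (-(x3^n*2^n*x1^n)) * hC
      · rw [div_pow, div_pow]; field_simp
        ring
      · simp only [show (4:ℝ) = 2 * 2 by norm_num, mul_pow]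
        rw [div_pow, div_pow]
        field_simp
        rw [div_pow]
        field_simp
        linear_combination (-(x3^n*(2^n)^2*x1^(n+1)*(x1*x4-2*x3^2))) * hC
end

section
/- Let φ be the F₀ map, a,b > 0, and C_{(a,b)} = {x ∈ ℝ₊⁴ : x₂²+x₃² = √(ab)·x₁x₄, x₃ = √(a/b)·x₂}. Then C_{(a,b)} is invariant under φ^(4), and for x ∈ C_{(a,b)}, φ^(4n)(x) = (k₂/k₁)^{2n(n−1)} (x₂/x₁)^{4n} (k₁ⁿx₁, k₂ⁿx₂, k₂ⁿx₃, (k₂^{2n}/k₁ⁿ)x₄), where k₁ = (1+ab)²(a+b)⁴/(a³b⁵) and k₂ = (1+ab)⁴(a+b)⁶/(a⁵b⁷). -/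
/-- The fiber C₍ₐ,ᵦ₎ for the F₀ map. -/
noncomputable def Cab (a b : ℝ) : Set (ℝ × ℝ × ℝ × ℝ) :=
  {x | (0 < x.1 ∧ 0 < x.2.1 ∧ 0 < x.2.2.1 ∧ 0 < x.2.2.2) ∧
    x.2.1 ^ 2 + x.2.2.1 ^ 2 = Real.sqrt (a * b) * x.1 * x.2.2.2 ∧
    x.2.2.1 = Real.sqrt (a / b) * x.2.1}

noncomputable def Xp (p q r s : ℝ) : ℝ × ℝ × ℝ × ℝ :=
  (p, q, s * q, (1 + s ^ 2) * q ^ 2 / (r * p))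

lemma phi_step (p q r s : ℝ) (hp : 0 < p) (hq : 0 < q) (hr : 0 < r) (hs : 0 < s) :
    phiF0 (Xp p q r s) = Xp (s * q) ((1 + s ^ 2) * q ^ 2 / (r * p)) (1 / s) r := by
  have hp' : p ≠ 0 := ne_of_gt hp
  have hq' : q ≠ 0 := ne_of_gt hq
  have hr' : r ≠ 0 := ne_of_gt hr
  have hs' : s ≠ 0 := ne_of_gt hs
  simp only [phiF0, Xp, Prod.mk.injEq]
  refine ⟨trivial, trivial, ?_, ?_⟩ <;> field_simp <;> ring

set_option maxHeartbeats 1600000 in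
lemma phi4 (p q r s : ℝ) (hp : 0 < p) (hq : 0 < q) (hr : 0 < r) (hs : 0 < s) :
    phiF0^[4] (Xp p q r s) =
      Xp ((q / p) ^ 4 * ((1 + r ^ 2) ^ 2 * (1 + s ^ 2) ^ 4 / (r ^ 4 * s ^ 2) * p))
         ((q / p) ^ 4 * ((1 + r ^ 2) ^ 4 * (1 + s ^ 2) ^ 6 / (r ^ 6 * s ^ 4) * q)) r s := by
  have e : phiF0^[4] (Xp p q r s) = phiF0 (phiF0 (phiF0 (phiF0 (Xp p q r s)))) := by
    simp only [show (4:ℕ) = 3+1 from rfl, show (3:ℕ)=2+1 from rfl, show (2:ℕ)=1+1 from rfl,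
      Function.iterate_succ_apply, Function.iterate_one, Function.iterate_zero_apply]
  have hp' : p ≠ 0 := ne_of_gt hp
  have hq' : q ≠ 0 := ne_of_gt hq
  have hr' : r ≠ 0 := ne_of_gt hr
  have hs' : s ≠ 0 := ne_of_gt hs
  have h1s : (1 : ℝ) + s ^ 2 ≠ 0 := by positivity
  have h1r : (1 : ℝ) + r ^ 2 ≠ 0 := by positivity
  have h1 : phiF0 (Xp p q r s)
      = Xp (s * q) ((1 + s ^ 2) * q ^ 2 / (r * p)) (1 / s) r :=
    phi_step p q r s hp hq hr hs
  have h2 : phiF0 (Xp (s * q) ((1 + s ^ 2) * q ^ 2 / (r * p)) (1 / s) r)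
      = Xp ((1 + s ^ 2) * q ^ 2 / p)
           ((1 + r ^ 2) * (1 + s ^ 2) ^ 2 * q ^ 3 / (r ^ 2 * p ^ 2)) (1 / r) (1 / s) := by
    rw [phi_step _ _ _ _ (by positivity) (by positivity) (by positivity) hr]
    simp only [Xp, Prod.mk.injEq, one_div_one_div]
    refine ⟨?_, ?_, ?_, ?_⟩ <;> field_simp <;> ring
  have h3 : phiF0 (Xp ((1 + s ^ 2) * q ^ 2 / p)
        ((1 + r ^ 2) * (1 + s ^ 2) ^ 2 * q ^ 3 / (r ^ 2 * p ^ 2)) (1 / r) (1 / s))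
      = Xp ((1 + r ^ 2) * (1 + s ^ 2) ^ 2 * q ^ 3 / (s * r ^ 2 * p ^ 2))
           ((1 + r ^ 2) ^ 2 * (1 + s ^ 2) ^ 4 * q ^ 4 / (s ^ 2 * r ^ 3 * p ^ 3)) s (1 / r) := by
    rw [phi_step _ _ _ _ (by positivity) (by positivity) (by positivity) (by positivity)]
    simp only [Xp, Prod.mk.injEq, one_div_one_div]
    refine ⟨?_, ?_, ?_, ?_⟩ <;> field_simp <;> ring
  have h4 : phiF0 (Xp ((1 + r ^ 2) * (1 + s ^ 2) ^ 2 * q ^ 3 / (s * r ^ 2 * p ^ 2))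
        ((1 + r ^ 2) ^ 2 * (1 + s ^ 2) ^ 4 * q ^ 4 / (s ^ 2 * r ^ 3 * p ^ 3)) s (1 / r))
      = Xp ((q / p) ^ 4 * ((1 + r ^ 2) ^ 2 * (1 + s ^ 2) ^ 4 / (r ^ 4 * s ^ 2) * p))
           ((q / p) ^ 4 * ((1 + r ^ 2) ^ 4 * (1 + s ^ 2) ^ 6 / (r ^ 6 * s ^ 4) * q)) r s := by
    rw [phi_step _ _ _ _ (by positivity) (by positivity) (by positivity) (by positivity)]
    simp only [Xp, Prod.mk.injEq, one_div_one_div]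
    refine ⟨?_, ?_, ?_, ?_⟩ <;> field_simp <;> ring
  rw [e, h1, h2, h3, h4]

lemma Xp_mem (a b : ℝ) (ha : 0 < a) (hb : 0 < b) (p q : ℝ) (hp : 0 < p) (hq : 0 < q) :
    Xp p q (Real.sqrt (a * b)) (Real.sqrt (a / b)) ∈ Cab a b := by
  have hr : 0 < Real.sqrt (a * b) := Real.sqrt_pos.2 (by positivity)
  have hs : 0 < Real.sqrt (a / b) := Real.sqrt_pos.2 (by positivity)
  set r := Real.sqrt (a * b)
  set s := Real.sqrt (a / b)
  have hr' : r ≠ 0 := ne_of_gt hr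
  have hp' : p ≠ 0 := ne_of_gt hp
  refine ⟨⟨hp, hq, ?_, ?_⟩, ?_, rfl⟩
  · show 0 < s * q
    positivity
  · show 0 < (1 + s ^ 2) * q ^ 2 / (r * p)
    positivity
  show q ^ 2 + (s * q) ^ 2 = r * p * ((1 + s ^ 2) * q ^ 2 / (r * p))
  field_simp

lemma mem_rep (a b : ℝ) (ha : 0 < a) (hb : 0 < b) (x1 x2 x3 x4 : ℝ)
    (hx : (x1, x2, x3, x4) ∈ Cab a b) :
    (x1, x2, x3, x4) = Xp x1 x2 (Real.sqrt (a * b)) (Real.sqrt (a / b)) := by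
  obtain ⟨⟨p1, p2, _, _⟩, heq, h3⟩ := hx
  have hr : 0 < Real.sqrt (a * b) := Real.sqrt_pos.2 (by positivity)
  set r := Real.sqrt (a * b)
  set s := Real.sqrt (a / b)
  simp only [Xp, Prod.mk.injEq]
  refine ⟨trivial, trivial, h3, ?_⟩
  rw [eq_comm, div_eq_iff (by positivity)]
  simp only at heq h3
  rw [h3] at heq
  linear_combination heq

lemma Cab_mul (a b : ℝ) (d1 d2 : ℝ) (hd1 : 0 < d1) (hd2 : 0 < d2) (x1 x2 x3 x4 : ℝ)
    (hx : (x1, x2, x3, x4) ∈ Cab a b) :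
    (d1 * x1, d2 * x2, d2 * x3, d2 ^ 2 / d1 * x4) ∈ Cab a b := by
  obtain ⟨⟨p1, p2, p3, p4⟩, heq, h3⟩ := hx
  simp only at p1 p2 p3 p4 heq h3
  refine ⟨⟨by positivity, by positivity, by positivity, by positivity⟩, ?_, ?_⟩
  · show (d2 * x2) ^ 2 + (d2 * x3) ^ 2 = Real.sqrt (a * b) * (d1 * x1) * (d2 ^ 2 / d1 * x4)
    have e : (d2 * x2) ^ 2 + (d2 * x3) ^ 2 = d2 ^ 2 * (x2 ^ 2 + x3 ^ 2) := by ring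
    rw [e, heq]
    field_simp
  · show d2 * x3 = Real.sqrt (a / b) * (d2 * x2)
    rw [h3]; ring

lemma stepA (a b : ℝ) (ha : 0 < a) (hb : 0 < b) (k1 k2 : ℝ)
    (hk1 : k1 = (1 + a * b) ^ 2 * (a + b) ^ 4 / (a ^ 3 * b ^ 5))
    (hk2 : k2 = (1 + a * b) ^ 4 * (a + b) ^ 6 / (a ^ 5 * b ^ 7)) (x1 x2 x3 x4 : ℝ)
    (hx : (x1, x2, x3, x4) ∈ Cab a b) :
    phiF0^[4] (x1, x2, x3, x4) ∈ Cab a b ∧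
    phiF0^[4] (x1, x2, x3, x4) =
      ((x2 / x1) ^ 4 * (k1 * x1),
       (x2 / x1) ^ 4 * (k2 * x2),
       (x2 / x1) ^ 4 * (k2 * x3),
       (x2 / x1) ^ 4 * (k2 ^ 2 / k1 * x4)) := by
  subst hk1; subst hk2
  have hp1 : 0 < x1 := hx.1.1
  have hp2 : 0 < x2 := hx.1.2.1
  have hr : 0 < Real.sqrt (a * b) := Real.sqrt_pos.2 (by positivity)
  have hs : 0 < Real.sqrt (a / b) := Real.sqrt_pos.2 (by positivity)
  have hrep := mem_rep a b ha hb x1 x2 x3 x4 hx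
  set r := Real.sqrt (a * b) with hrdef
  set s := Real.sqrt (a / b) with hsdef
  have hr2 : r ^ 2 = a * b := Real.sq_sqrt (by positivity)
  have hs2 : s ^ 2 = a / b := Real.sq_sqrt (by positivity)
  have ha' : a ≠ 0 := ne_of_gt ha
  have hb' : b ≠ 0 := ne_of_gt hb
  have hr' : r ≠ 0 := ne_of_gt hr
  have hs' : s ≠ 0 := ne_of_gt hs
  have hx1 : x1 ≠ 0 := ne_of_gt hp1
  have hx2 : x2 ≠ 0 := ne_of_gt hp2
  have hK1 : (1 + r ^ 2) ^ 2 * (1 + s ^ 2) ^ 4 / (r ^ 4 * s ^ 2)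
      = (1 + a * b) ^ 2 * (a + b) ^ 4 / (a ^ 3 * b ^ 5) := by
    rw [show r ^ 4 = (r ^ 2) ^ 2 by ring, hr2, hs2]
    field_simp
    ring
  have hK2 : (1 + r ^ 2) ^ 4 * (1 + s ^ 2) ^ 6 / (r ^ 6 * s ^ 4)
      = (1 + a * b) ^ 4 * (a + b) ^ 6 / (a ^ 5 * b ^ 7) := by
    rw [show r ^ 6 = (r ^ 2) ^ 3 by ring, show s ^ 4 = (s ^ 2) ^ 2 by ring, hr2, hs2]
    field_simp
    ring
  have hiter : phiF0^[4] (x1, x2, x3, x4) =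
      Xp ((x2 / x1) ^ 4 * ((1 + r ^ 2) ^ 2 * (1 + s ^ 2) ^ 4 / (r ^ 4 * s ^ 2) * x1))
         ((x2 / x1) ^ 4 * ((1 + r ^ 2) ^ 4 * (1 + s ^ 2) ^ 6 / (r ^ 6 * s ^ 4) * x2)) r s := by
    rw [hrep]; exact phi4 x1 x2 r s hp1 hp2 hr hs
  constructor
  · rw [hiter]
    exact Xp_mem a b ha hb _ _ (by positivity) (by positivity)
  · rw [hiter]
    have h3 : x3 = s * x2 := hx.2.2
    have h4 : x4 = (1 + s ^ 2) * x2 ^ 2 / (r * x1) := by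
      have := congrArg (fun t : ℝ × ℝ × ℝ × ℝ => t.2.2.2) hrep
      simpa [Xp] using this
    rw [← hK1, ← hK2, h3, h4]
    simp only [Xp, Prod.mk.injEq]
    have h1K : (0:ℝ) < (1 + r ^ 2) ^ 2 * (1 + s ^ 2) ^ 4 / (r ^ 4 * s ^ 2) := by positivity
    refine ⟨trivial, trivial, by ring, ?_⟩
    field_simp

lemma main_aux (a b : ℝ) (ha : 0 < a) (hb : 0 < b) (k1 k2 : ℝ)
    (hk1 : k1 = (1 + a * b) ^ 2 * (a + b) ^ 4 / (a ^ 3 * b ^ 5))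
    (hk2 : k2 = (1 + a * b) ^ 4 * (a + b) ^ 6 / (a ^ 5 * b ^ 7))
    (x1 x2 x3 x4 : ℝ) (hx : (x1, x2, x3, x4) ∈ Cab a b) (n : ℕ) :
    phiF0^[4 * n] (x1, x2, x3, x4) =
      ((k2 / k1) ^ (2 * n * (n - 1)) * (x2 / x1) ^ (4 * n) * (k1 ^ n * x1),
       (k2 / k1) ^ (2 * n * (n - 1)) * (x2 / x1) ^ (4 * n) * (k2 ^ n * x2),
       (k2 / k1) ^ (2 * n * (n - 1)) * (x2 / x1) ^ (4 * n) * (k2 ^ n * x3),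
       (k2 / k1) ^ (2 * n * (n - 1)) * (x2 / x1) ^ (4 * n) * (k2 ^ (2 * n) / k1 ^ n * x4)) := by
  have hk1pos : 0 < k1 := by rw [hk1]; positivity
  have hk2pos : 0 < k2 := by rw [hk2]; positivity
  have hk1' : k1 ≠ 0 := ne_of_gt hk1pos
  have hk2' : k2 ≠ 0 := ne_of_gt hk2pos
  have hp1 : 0 < x1 := hx.1.1
  have hp2 : 0 < x2 := hx.1.2.1
  have hx1 : x1 ≠ 0 := ne_of_gt hp1
  have hx2 : x2 ≠ 0 := ne_of_gt hp2
  induction n with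
  | zero => norm_num
  | succ m ih =>
    have hk1m : k1 ^ m ≠ 0 := pow_ne_zero _ hk1'
    have hk2m : k2 ^ m ≠ 0 := pow_ne_zero _ hk2'
    have hcm : (0:ℝ) < (k2 / k1) ^ (2 * m * (m - 1)) * (x2 / x1) ^ (4 * m) := by positivity
    obtain ⟨cm, hcm_def⟩ : ∃ cm : ℝ, cm = (k2 / k1) ^ (2 * m * (m - 1)) * (x2 / x1) ^ (4 * m) :=
      ⟨_, rfl⟩
    rw [← hcm_def] at ih hcm
    have hcm' : cm ≠ 0 := ne_of_gt hcm
    have hmem : (cm * k1 ^ m * x1, cm * k2 ^ m * x2, cm * k2 ^ m * x3,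
        (cm * k2 ^ m) ^ 2 / (cm * k1 ^ m) * x4) ∈ Cab a b :=
      Cab_mul a b (cm * k1 ^ m) (cm * k2 ^ m) (by positivity) (by positivity) x1 x2 x3 x4 hx
    have hih : phiF0^[4 * m] (x1, x2, x3, x4) =
        (cm * k1 ^ m * x1, cm * k2 ^ m * x2, cm * k2 ^ m * x3,
         (cm * k2 ^ m) ^ 2 / (cm * k1 ^ m) * x4) := by
      rw [ih]
      simp only [Prod.mk.injEq]
      refine ⟨by ring, by ring, by ring, ?_⟩
      rw [show k2 ^ (2 * m) = (k2 ^ m) ^ 2 from by rw [pow_mul']]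
      field_simp
    have hstep := (stepA a b ha hb k1 k2 hk1 hk2 _ _ _ _ hmem).2
    have hsplit : phiF0^[4 * (m + 1)] (x1, x2, x3, x4)
        = phiF0^[4] (phiF0^[4 * m] (x1, x2, x3, x4)) := by
      rw [show 4 * (m + 1) = 4 + 4 * m from by ring, Function.iterate_add_apply]
    rw [hsplit, hih, hstep]
    have hexp : 2 * (m + 1) * (m + 1 - 1) = 2 * m * (m - 1) + 4 * m := by
      cases m with
      | zero => rfl
      | succ l => simp only [Nat.add_sub_cancel]; ring
    have hc : (k2 / k1) ^ (2 * (m + 1) * (m + 1 - 1)) * (x2 / x1) ^ (4 * (m + 1))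
        = cm * (k2 ^ m / k1 ^ m) ^ 4 * (x2 / x1) ^ 4 := by
      rw [hexp, pow_add, show 4 * (m + 1) = 4 * m + 4 from by ring, pow_add,
          show (k2 / k1) ^ (4 * m) = ((k2 / k1) ^ m) ^ 4 from by rw [pow_mul'], div_pow,
          hcm_def]
      ring
    rw [hc, show k1 ^ (m + 1) = k1 * k1 ^ m from by ring,
        show k2 ^ (m + 1) = k2 * k2 ^ m from by ring,
        show k2 ^ (2 * (m + 1)) = k2 ^ 2 * (k2 ^ m) ^ 2 from by
          rw [show 2 * (m + 1) = 2 * m + 2 from by ring, pow_add, pow_mul']; ring]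
    simp only [Prod.mk.injEq]
    refine ⟨?_, ?_, ?_, ?_⟩ <;> field_simp <;> ring

theorem phiF0_fourth_iterate_on_Cab (a b : ℝ) (ha : 0 < a) (hb : 0 < b) :
    (∀ x ∈ Cab a b, phiF0^[4] x ∈ Cab a b) ∧
    (∀ x1 x2 x3 x4 : ℝ, (x1, x2, x3, x4) ∈ Cab a b → ∀ n : ℕ,
      let k1 : ℝ := (1 + a * b) ^ 2 * (a + b) ^ 4 / (a ^ 3 * b ^ 5)
      let k2 : ℝ := (1 + a * b) ^ 4 * (a + b) ^ 6 / (a ^ 5 * b ^ 7)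
      let c : ℝ := (k2 / k1) ^ (2 * n * (n - 1)) * (x2 / x1) ^ (4 * n)
      phiF0^[4 * n] (x1, x2, x3, x4) =
        (c * (k1 ^ n * x1), c * (k2 ^ n * x2), c * (k2 ^ n * x3),
         c * (k2 ^ (2 * n) / k1 ^ n * x4))) := by
  constructor
  · rintro ⟨x1, x2, x3, x4⟩ hx
    exact (stepA a b ha hb _ _ rfl rfl x1 x2 x3 x4 hx).1
  · intro x1 x2 x3 x4 hx n
    exact main_aux a b ha hb _ _ rfl rfl x1 x2 x3 x4 hx n
end

section
/- The F₀ map φ has no periodic points in ℝ₊⁴: for every x ∈ ℝ₊⁴ and every m ≥ 1, φ^(m)(x) ≠ x. Moreover each component of φ^(n)(x) tends to +∞ as n → ∞. -/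
open Filter

lemma seq_blowup (u v : ℕ → ℝ) (hu : ∀ n, 0 < u n) (hv : ∀ n, 0 < v n)
    (h1 : ∀ n, u (n + 2) * u n = v n ^ 2 + u (n + 1) ^ 2)
    (h2 : ∀ n, v (n + 2) * v n = v (n + 1) ^ 2 + u (n + 2) ^ 2) :
    Tendsto u atTop atTop ∧ Tendsto v atTop atTop := by
  set ρ : ℕ → ℝ := fun n => u (n + 1) / u n with hρ
  have hρpos : ∀ n, 0 < ρ n := fun n => div_pos (hu _) (hu _)
  -- ρ strictly increasing
  have hρmono : StrictMono ρ := by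
    apply strictMono_nat_of_lt_succ
    intro n
    show u (n + 1) / u n < u (n + 1 + 1) / u (n + 1)
    rw [div_lt_div_iff₀ (hu n) (hu (n + 1))]
    nlinarith [sq_nonneg (v n), hv n, h1 n]
  -- ρ (n+1) ≥ 2 * (v n / u n)
  have key1 : ∀ n, 2 * (v n / u n) ≤ ρ (n + 1) := by
    intro n
    show 2 * (v n / u n) ≤ u (n + 1 + 1) / u (n + 1)
    rw [mul_div_assoc', div_le_div_iff₀ (hu n) (hu (n + 1))]
    nlinarith [sq_nonneg (v n - u (n + 1)), h1 n]
  -- v (n+2) / u (n+2) ≥ 2 * ρ n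
  have key2 : ∀ n, 2 * ρ n ≤ v (n + 2) / u (n + 2) := by
    intro n
    show 2 * (u (n + 1) / u n) ≤ v (n + 2) / u (n + 2)
    rw [mul_div_assoc', div_le_div_iff₀ (hu n) (hu (n + 2))]
    -- 2 * u(n+1) * u(n+2) ≤ v(n+2) * u n
    -- from v(n+2) v n ≥ u(n+2)^2 and u(n+2) u n ≥ 2 v n u(n+1)
    have A : u (n + 2) ^ 2 ≤ v (n + 2) * v n := by nlinarith [sq_nonneg (v (n + 1)), h2 n]
    have B : 2 * (v n * u (n + 1)) ≤ u (n + 2) * u n := by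
      nlinarith [sq_nonneg (v n - u (n + 1)), h1 n]
    have hvn := hv n
    have C : 2 * (v n * u (n + 1)) * u (n + 2) ≤ v (n + 2) * v n * u n := by
      calc 2 * (v n * u (n + 1)) * u (n + 2) ≤ u (n + 2) * u n * u (n + 2) := by
            nlinarith [B, hu (n + 2)]
        _ = u (n + 2) ^ 2 * u n := by ring
        _ ≤ v (n + 2) * v n * u n := by nlinarith [A, hu n]
    nlinarith [C, hvn]
  have hstep : ∀ n, 4 * ρ n ≤ ρ (n + 3) := by
    intro n
    have a := key1 (n + 2)
    have b := key2 n
    have : n + 2 + 1 = n + 3 := rfl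
    rw [this] at a
    linarith
  have hgeo : ∀ k, 4 ^ k * ρ 0 ≤ ρ (3 * k) := by
    intro k
    induction k with
    | zero => simp
    | succ k ih =>
      have := hstep (3 * k)
      have e : 3 * k + 3 = 3 * (k + 1) := by ring
      rw [e] at this
      calc 4 ^ (k + 1) * ρ 0 = 4 * (4 ^ k * ρ 0) := by ring
        _ ≤ 4 * ρ (3 * k) := by linarith [hρpos 0]
        _ ≤ ρ (3 * (k + 1)) := this
  obtain ⟨k, hk⟩ := ((tendsto_pow_atTop_atTop_of_one_lt
      (by norm_num : (1:ℝ) < 4)).eventually_ge_atTop (2 / ρ 0)).exists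
  set N := 3 * k with hNdef
  have hN2 : 2 ≤ ρ N := by
    have := hgeo k
    have h0 := hρpos 0
    rw [div_le_iff₀ h0] at hk
    linarith
  have hρ2 : ∀ n, N ≤ n → 2 ≤ ρ n := fun n hn => le_trans hN2 (hρmono.monotone hn)
  have hstep2 : ∀ n, N ≤ n → 2 * u n ≤ u (n + 1) := by
    intro n hn
    have h := hρ2 n hn
    rw [hρ, le_div_iff₀ (hu n)] at h
    linarith
  have hupow : ∀ j, 2 ^ j * u N ≤ u (N + j) := by
    intro j
    induction j with
    | zero => simp
    | succ j ih =>
      calc 2 ^ (j + 1) * u N = 2 * (2 ^ j * u N) := by ring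
        _ ≤ 2 * u (N + j) := by linarith
        _ ≤ u (N + j + 1) := hstep2 (N + j) (Nat.le_add_right N j)
  have huT : Tendsto u atTop atTop := by
    have hg : Tendsto (fun j : ℕ => (2:ℝ) ^ j * u N) atTop atTop :=
      (tendsto_pow_atTop_atTop_of_one_lt (by norm_num : (1:ℝ) < 2)).atTop_mul_const (hu N)
    have h := tendsto_atTop_mono hupow hg
    have h' : Tendsto (fun j : ℕ => u (j + N)) atTop atTop := by
      simpa [Nat.add_comm] using h
    exact (tendsto_add_atTop_iff_nat N).mp h'
  refine ⟨huT, tendsto_atTop_mono' atTop ?_ huT⟩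
  filter_upwards [eventually_ge_atTop (N + 2)] with m hm
  obtain ⟨n, rfl⟩ : ∃ n, m = n + 2 := ⟨m - 2, by omega⟩
  have hn : N ≤ n := by omega
  have b := key2 n
  have h2' : 2 ≤ ρ n := hρ2 n hn
  have h1' : (1:ℝ) ≤ v (n + 2) / u (n + 2) := by linarith
  rw [le_div_iff₀ (hu (n + 2))] at h1'
  linarith


theorem phiF0_no_periodic_points_and_blowup :
    ∀ x : ℝ × ℝ × ℝ × ℝ,
      0 < x.1 → 0 < x.2.1 → 0 < x.2.2.1 → 0 < x.2.2.2 →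
      (∀ m : ℕ, 1 ≤ m → phiF0^[m] x ≠ x) ∧
      Filter.Tendsto (fun n => (phiF0^[n] x).1) Filter.atTop Filter.atTop ∧
      Filter.Tendsto (fun n => (phiF0^[n] x).2.1) Filter.atTop Filter.atTop ∧
      Filter.Tendsto (fun n => (phiF0^[n] x).2.2.1) Filter.atTop Filter.atTop ∧
      Filter.Tendsto (fun n => (phiF0^[n] x).2.2.2) Filter.atTop Filter.atTop := by
  intro x hx1 hx2 hx3 hx4
  set u : ℕ → ℝ := fun n => (phiF0^[n] x).1 with hudef
  set v : ℕ → ℝ := fun n => (phiF0^[n] x).2.1 with hvdef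
  -- shift identities
  have e3 : ∀ n, (phiF0^[n] x).2.2.1 = u (n + 1) := by
    intro n
    show (phiF0^[n] x).2.2.1 = (phiF0^[n + 1] x).1
    rw [Function.iterate_succ_apply']
    rfl
  have e4 : ∀ n, (phiF0^[n] x).2.2.2 = v (n + 1) := by
    intro n
    show (phiF0^[n] x).2.2.2 = (phiF0^[n + 1] x).2.1
    rw [Function.iterate_succ_apply']
    rfl
  have htup : ∀ n, phiF0^[n] x = (u n, v n, u (n + 1), v (n + 1)) := by
    intro n
    have : phiF0^[n] x
        = ((phiF0^[n] x).1, (phiF0^[n] x).2.1, (phiF0^[n] x).2.2.1, (phiF0^[n] x).2.2.2) := rfl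
    rw [this, e3, e4]
  -- positivity
  have pos : ∀ n, 0 < u n ∧ 0 < v n := by
    have key : ∀ n, 0 < (phiF0^[n] x).1 ∧ 0 < (phiF0^[n] x).2.1 ∧
        0 < (phiF0^[n] x).2.2.1 ∧ 0 < (phiF0^[n] x).2.2.2 := by
      intro n
      induction n with
      | zero => exact ⟨hx1, hx2, hx3, hx4⟩
      | succ n ih =>
        obtain ⟨p1, p2, p3, p4⟩ := ih
        rw [Function.iterate_succ_apply']
        set p := phiF0^[n] x
        refine ⟨p3, p4, ?_, ?_⟩
        · show 0 < (p.2.1 ^ 2 + p.2.2.1 ^ 2) / p.1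
          exact div_pos (by positivity) p1
        · show 0 < (p.1 ^ 2 * p.2.2.2 ^ 2 + (p.2.1 ^ 2 + p.2.2.1 ^ 2) ^ 2) / (p.1 ^ 2 * p.2.1)
          have : (0:ℝ) < p.1 ^ 2 * p.2.1 := by positivity
          exact div_pos (by positivity) this
    exact fun n => ⟨(key n).1, (key n).2.1⟩
  have hu : ∀ n, 0 < u n := fun n => (pos n).1
  have hv : ∀ n, 0 < v n := fun n => (pos n).2
  -- the recurrence in explicit form
  have hstep : ∀ n, phiF0^[n + 1] x =
      (u (n + 1), v (n + 1), (v n ^ 2 + u (n + 1) ^ 2) / u n,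
        ((u n) ^ 2 * (v (n + 1)) ^ 2 + (v n ^ 2 + u (n + 1) ^ 2) ^ 2) / ((u n) ^ 2 * v n)) := by
    intro n
    rw [Function.iterate_succ_apply', htup n]
    rfl
  have formulas : ∀ n, u (n + 2) = (v n ^ 2 + u (n + 1) ^ 2) / u n ∧
      v (n + 2) = ((u n) ^ 2 * (v (n + 1)) ^ 2 + (v n ^ 2 + u (n + 1) ^ 2) ^ 2)
        / ((u n) ^ 2 * v n) := by
    intro n
    have h := (htup (n + 1)).symm.trans (hstep n)
    constructor
    · exact congrArg (fun p => p.2.2.1) h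
    · exact congrArg (fun p => p.2.2.2) h
  have h1 : ∀ n, u (n + 2) * u n = v n ^ 2 + u (n + 1) ^ 2 := by
    intro n
    rw [(formulas n).1, div_mul_cancel₀ _ (hu n).ne']
  have h2 : ∀ n, v (n + 2) * v n = v (n + 1) ^ 2 + u (n + 2) ^ 2 := by
    intro n
    rw [(formulas n).1, (formulas n).2]
    have h0 : u n ≠ 0 := (hu n).ne'
    have h0' : v n ≠ 0 := (hv n).ne'
    field_simp
  obtain ⟨huT, hvT⟩ := seq_blowup u v hu hv h1 h2
  have c3 : Tendsto (fun n => (phiF0^[n] x).2.2.1) atTop atTop := by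
    simp only [e3]
    exact huT.comp (tendsto_add_atTop_nat 1)
  have c4 : Tendsto (fun n => (phiF0^[n] x).2.2.2) atTop atTop := by
    simp only [e4]
    exact hvT.comp (tendsto_add_atTop_nat 1)
  refine ⟨?_, huT, hvT, c3, c4⟩
  intro m hm heq
  have hfix : ∀ k, u (m * k) = x.1 := by
    intro k
    show (phiF0^[m * k] x).1 = x.1
    rw [Function.iterate_mul]
    rw [Function.iterate_fixed heq k]
  have hmk : Tendsto (fun k => m * k) atTop atTop := by
    apply tendsto_atTop_mono (fun k => Nat.le_mul_of_pos_left k hm) tendsto_id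
  have := (huT.comp hmk).eventually_gt_atTop x.1
  obtain ⟨k, hk⟩ := this.exists
  simp only [Function.comp] at hk
  rw [hfix k] at hk
  exact lt_irrefl _ hk
end

section
/- The functions J₁(x) = (x₁²x₄² + (x₂²+x₃²)²)/(x₁x₂x₃x₄) and J₂(x) = x₁²x₄²/(x₂²+x₃²)² + (x₂²+x₃²)²/(x₁²x₄²) + x₃²/x₂² + x₂²/x₃² are first integrals of the F₀ map φ: J_k(φ(x)) = J_k(x) for all x ∈ ℝ₊⁴ and k = 1, 2. -/
noncomputable def J1 : ℝ × ℝ × ℝ × ℝ → ℝ :=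
  fun x =>
    match x with
    | (x1, x2, x3, x4) =>
      (x1 ^ 2 * x4 ^ 2 + (x2 ^ 2 + x3 ^ 2) ^ 2) / (x1 * x2 * x3 * x4)

noncomputable def J2 : ℝ × ℝ × ℝ × ℝ → ℝ :=
  fun x =>
    match x with
    | (x1, x2, x3, x4) =>
      x1 ^ 2 * x4 ^ 2 / (x2 ^ 2 + x3 ^ 2) ^ 2 + (x2 ^ 2 + x3 ^ 2) ^ 2 / (x1 ^ 2 * x4 ^ 2) +
        x3 ^ 2 / x2 ^ 2 + x2 ^ 2 / x3 ^ 2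

theorem J1_J2_first_integrals_of_phiF0 :
    ∀ x : ℝ × ℝ × ℝ × ℝ,
      0 < x.1 → 0 < x.2.1 → 0 < x.2.2.1 → 0 < x.2.2.2 →
      J1 (phiF0 x) = J1 x ∧ J2 (phiF0 x) = J2 x := by
  rintro ⟨x1, x2, x3, x4⟩ h1 h2 h3 h4
  simp only at h1 h2 h3 h4
  have h1' := h1.ne'
  have h2' := h2.ne'
  have h3' := h3.ne'
  have h4' := h4.ne'
  have hs : x2 ^ 2 + x3 ^ 2 ≠ 0 := by positivity
  have hnum : x1 ^ 2 * x4 ^ 2 + (x2 ^ 2 + x3 ^ 2) ^ 2 ≠ 0 := by positivity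
  constructor
  · simp only [phiF0, J1]
    field_simp
    ring
  · simp only [phiF0, J2]
    field_simp
    ring
end
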